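/- For every r > π one has 4(1 − cos r)/(r − sin r) < 8/π, and 4(1 − cos r)/(r − sin r) → 8/π as r → π. Moreover, for every r with cos r ≠ −1 and r ≠ sin r, 4 sin² r / ((r − sin r)(1 + cos r)) = 4(1 − cos r)/(r − sin r). -/

import Mathlib

open Real

private lemma sin_neg_on (r : ℝ) (h1 : Real.pi < r) (h2 : r < 2 * Real.pi) :
    Real.sin r < 0 := by
  have : Real.sin (r - Real.pi + Real.pi) = -Real.sin (r - Real.pi) := Real.sin_add_pi _
  have hpos : 0 < Real.sin (r - Real.pi) :=
    Real.sin_pos_of_pos_of_lt_pi (by linarith) (by linarith)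
  have : Real.sin r = -Real.sin (r - Real.pi) := by
    simpa using this
  linarith

private lemma key (r : ℝ) (hr : Real.pi < r) :
    0 < 2 * r - Real.pi - 2 * Real.sin r + Real.pi * Real.cos r := by
  have hpi := Real.pi_gt_three
  rcases le_or_gt r (2 * Real.pi) with hle | hgt
  · -- monotonicity on [π, 2π]
    set f : ℝ → ℝ := fun x => 2 * x - Real.pi - 2 * Real.sin x + Real.pi * Real.cos x with hf
    have hmono : StrictMonoOn f (Set.Icc Real.pi (2 * Real.pi)) := by
      apply strictMonoOn_of_deriv_pos (convex_Icc _ _)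
      · fun_prop
      · intro x hx
        rw [interior_Icc] at hx
        have hd : HasDerivAt f (2 - 2 * Real.cos x - Real.pi * Real.sin x) x := by
          have h1 := ((((hasDerivAt_id x).const_mul 2).sub_const Real.pi).sub
              ((Real.hasDerivAt_sin x).const_mul 2)).add
              ((Real.hasDerivAt_cos x).const_mul Real.pi)
          simp only [id_eq] at h1
          exact h1.congr_deriv (by ring)
        rw [hd.deriv]
        have hs : Real.sin x < 0 := sin_neg_on x hx.1 hx.2
        have hc : Real.cos x ≤ 1 := Real.cos_le_one x
        nlinarith [Real.pi_pos]
    have h0 : f Real.pi = 0 := by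
      simp [hf, Real.sin_pi, Real.cos_pi]; ring
    have := hmono (Set.left_mem_Icc.2 (by linarith)) ⟨le_of_lt hr, hle⟩ hr
    rw [h0] at this
    exact this
  · have hs : Real.sin r ≤ 1 := Real.sin_le_one r
    have hc : -1 ≤ Real.cos r := Real.neg_one_le_cos r
    nlinarith

theorem stmt_16 :
    (∀ r : ℝ, Real.pi < r → 4 * (1 - Real.cos r) / (r - Real.sin r) < 8 / Real.pi) ∧
    Filter.Tendsto (fun r : ℝ => 4 * (1 - Real.cos r) / (r - Real.sin r))
      (nhdsWithin Real.pi {Real.pi}ᶜ) (nhds (8 / Real.pi)) ∧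
    (∀ r : ℝ, Real.cos r ≠ -1 → r ≠ Real.sin r →
      4 * Real.sin r ^ 2 / ((r - Real.sin r) * (1 + Real.cos r))
        = 4 * (1 - Real.cos r) / (r - Real.sin r)) := by
  have hpi : (0:ℝ) < Real.pi := Real.pi_pos
  refine ⟨?_, ?_, ?_⟩
  · intro r hr
    have hden : 0 < r - Real.sin r := by
      have := Real.sin_le_one r
      have := Real.pi_gt_three
      linarith
    rw [div_lt_div_iff₀ hden hpi]
    have := key r hr
    nlinarith
  · have hcont : ContinuousAt (fun r : ℝ => 4 * (1 - Real.cos r) / (r - Real.sin r)) Real.pi := by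
      apply ContinuousAt.div
      · fun_prop
      · fun_prop
      · simp [Real.sin_pi]
    have hval : (4 * (1 - Real.cos Real.pi) / (Real.pi - Real.sin Real.pi)) = 8 / Real.pi := by
      simp [Real.sin_pi, Real.cos_pi]
      norm_num
    have := hcont.tendsto
    rw [hval] at this
    exact this.mono_left nhdsWithin_le_nhds
  · intro r hc hs
    have h1 : (1 + Real.cos r) ≠ 0 := fun h => hc (by linarith)
    have h2 : r - Real.sin r ≠ 0 := sub_ne_zero.2 hs
    have hsq : Real.sin r ^ 2 = (1 - Real.cos r) * (1 + Real.cos r) := by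
      have := Real.sin_sq_add_cos_sq r
      ring_nf
      nlinarith
    field_simp [hsq]
    ring
    linear_combination hsq
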